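/- Let G be a finite simple graph on vertex set {1,…,n} such that the ordering 1,2,…,n is a perfect elimination ordering of G, i.e., for every i the set { j > i : {i,j} ∈ E(G) } is a clique of G. Let I = I(G^c) be the edge ideal of the complement of G. Then I has linear quotients with respect to the lexicographic order on G(I) induced by x_1 > x_2 > … > x_n: listing the generators x_i x_j (i < j) so that x_i x_j comes before x_k x_l (k < l) whenever i < k, or i = k and j < l, every generator's colon ideal by the set of earlier generators is generated by variables. -/
import Mathlib


open MvPolynomial

lemma aux_pair_le {σ : Type*} {a b : σ} (m : σ →₀ ℕ) (ha : 1 ≤ m a) (hb : 1 ≤ m b)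
    (hab : a ≠ b) : Finsupp.single a 1 + Finsupp.single b 1 ≤ m := by
  rw [Finsupp.le_def]
  intro s
  rcases eq_or_ne s a with rfl | hsa
  · simpa [Finsupp.single_apply, hab.symm] using ha
  · rcases eq_or_ne s b with rfl | hsb
    · simpa [Finsupp.single_apply, Ne.symm hsa] using hb
    · simp [Finsupp.single_apply, Ne.symm hsa, Ne.symm hsb]

/-- if `1, 2, …, n` is a perfect elimination ordering of the finite simple graph `G`
(for every `i` the higher-indexed neighbours of `i` form a clique), then the edge ideal
`I = I(G^c)` of the complement has linear quotients with respect to the lexicographic order on its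
generators `x_i x_j` induced by `x_1 > x_2 > ⋯ > x_n`: for every generator, the colon ideal of the
earlier generators by it is generated by a subset of the variables. -/
theorem stmt_8 {K : Type*} [Field K] {n : ℕ} (G : SimpleGraph (Fin n))
    (peo : ∀ i j k : Fin n, i < j → i < k → G.Adj i j → G.Adj i k → j ≠ k → G.Adj j k) :
    ∀ i j : Fin n, i < j → ¬ G.Adj i j →
      ∃ T : Set (Fin n),
        Submodule.colon
          (Ideal.span {p : MvPolynomial (Fin n) K | ∃ k l : Fin n, k < l ∧ ¬ G.Adj k l ∧
            (k < i ∨ (k = i ∧ l < j)) ∧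
            p = monomial (Finsupp.single k 1 + Finsupp.single l 1) 1})
          (Ideal.span {(monomial (Finsupp.single i 1 + Finsupp.single j 1) (1 : K))})
        = Ideal.span (MvPolynomial.X '' T) := by
  intro i j hij hadj
  classical
  set D : Fin n →₀ ℕ := Finsupp.single i 1 + Finsupp.single j 1 with hD
  refine ⟨{t | (t < i ∧ ¬ G.Adj t i) ∨ (t < i ∧ ¬ G.Adj t j) ∨
    (i < t ∧ t < j ∧ ¬ G.Adj i t)}, ?_⟩
  have hset : {p : MvPolynomial (Fin n) K | ∃ k l : Fin n, k < l ∧ ¬ G.Adj k l ∧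
        (k < i ∨ (k = i ∧ l < j)) ∧
        p = monomial (Finsupp.single k 1 + Finsupp.single l 1) 1}
      = (fun s => monomial s (1 : K)) ''
        {d : Fin n →₀ ℕ | ∃ k l : Fin n, k < l ∧ ¬ G.Adj k l ∧
          (k < i ∨ (k = i ∧ l < j)) ∧ d = Finsupp.single k 1 + Finsupp.single l 1} := by
    ext p
    constructor
    · rintro ⟨k, l, h1, h2, h3, rfl⟩
      exact ⟨_, ⟨k, l, h1, h2, h3, rfl⟩, rfl⟩
    · rintro ⟨d, ⟨k, l, h1, h2, h3, rfl⟩, rfl⟩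
      exact ⟨k, l, h1, h2, h3, rfl⟩
  rw [hset]
  ext f
  rw [Ideal.mem_colon_span_singleton, mem_ideal_span_monomial_image, mem_ideal_span_X_image]
  have hDi : D i = 1 := by
    simp [hD, Finsupp.single_apply, hij.ne']
  have hDj : D j = 1 := by
    simp [hD, Finsupp.single_apply, hij.ne]
  have hDother : ∀ t : Fin n, t ≠ i → t ≠ j → D t = 0 := by
    intro t hti htj
    simp [hD, Finsupp.single_apply, Ne.symm hti, Ne.symm htj]
  have hsupp : ∀ m : Fin n →₀ ℕ,
      m ∈ (f * monomial D (1 : K)).support ↔ D ≤ m ∧ m - D ∈ f.support := by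
    intro m
    rw [MvPolynomial.mem_support_iff, MvPolynomial.coeff_mul_monomial']
    split_ifs with h
    · simp [h, MvPolynomial.mem_support_iff]
    · simp [h]
  constructor
  · intro hf m' hm'
    obtain ⟨d', ⟨k, l, hkl, hadjkl, hlex, rfl⟩, hdle⟩ := hf (m' + D) (by
      rw [hsupp]
      exact ⟨le_add_self, by simpa using hm'⟩)
    have key := Finsupp.le_def.mp hdle
    rcases hlex with hk | ⟨rfl, hl⟩
    · refine ⟨k, ?_, ?_⟩
      · by_cases hki : G.Adj k i
        · by_cases hkj : G.Adj k j
          · exact absurd (peo k i j hk (hk.trans hij) hki hkj hij.ne) hadj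
          · exact Or.inr (Or.inl ⟨hk, hkj⟩)
        · exact Or.inl ⟨hk, hki⟩
      · have h1 := key k
        have h2 : 1 ≤ (Finsupp.single k 1 + Finsupp.single l 1 : Fin n →₀ ℕ) k := by
          simp [Finsupp.single_apply]
        have h3 : (m' + D) k = m' k + D k := Finsupp.add_apply _ _ _
        have h4 : D k = 0 := hDother k hk.ne (hk.trans hij).ne
        omega
    · refine ⟨l, Or.inr (Or.inr ⟨hkl, hl, hadjkl⟩), ?_⟩
      have h1 := key l
      have h2 : 1 ≤ (Finsupp.single k 1 + Finsupp.single l 1 : Fin n →₀ ℕ) l := by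
        simp [Finsupp.single_apply]
      have h3 : (m' + D) l = m' l + D l := Finsupp.add_apply _ _ _
      have h4 : D l = 0 := hDother l hkl.ne' hl.ne
      omega
  · intro hf m hm
    rw [hsupp] at hm
    obtain ⟨hDm, hm'⟩ := hm
    obtain ⟨t, ht, htm⟩ := hf _ hm'
    have hmD := Finsupp.le_def.mp hDm
    have hmi : 1 ≤ m i := by have := hmD i; omega
    have hmj : 1 ≤ m j := by have := hmD j; omega
    have hmt : 1 ≤ m t := by
      have h1 : (m - D) t = m t - D t := Finsupp.tsub_apply m D t
      omega
    rcases ht with ⟨hti, hadjti⟩ | ⟨hti, hadjtj⟩ | ⟨hit, htj, hadjit⟩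
    · exact ⟨Finsupp.single t 1 + Finsupp.single i 1,
        ⟨t, i, hti, hadjti, Or.inl hti, rfl⟩, aux_pair_le m hmt hmi hti.ne⟩
    · exact ⟨Finsupp.single t 1 + Finsupp.single j 1,
        ⟨t, j, hti.trans hij, hadjtj, Or.inl hti, rfl⟩,
        aux_pair_le m hmt hmj (hti.trans hij).ne⟩
    · exact ⟨Finsupp.single i 1 + Finsupp.single t 1,
        ⟨i, t, hit, hadjit, Or.inr ⟨rfl, htj⟩, rfl⟩, aux_pair_le m hmi hmt hit.ne⟩
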